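/- arXiv:1506.07678 — 4 statements merged into one kernel-verified Lean document; each statement's English description precedes it below -/
import Mathlib

section
/- For fixed n ≥ 1 and prime power q, there exist positive constants m₁, m₂ (depending only on n and q) such that m₁ · q^{n²k} ≤ a(n,k,q) ≤ m₂ · q^{n²k} for all sufficiently large k, where a(n,k,q) is the number of simultaneous similarity classes of k-tuples of n×n matrices over F_q. -/
section Aux
variable {n : ℕ} {F : Type} [Field F] [Fintype F] {k : ℕ}

private def rel (n : ℕ) (F : Type) [Field F] (k : ℕ) :
    (Fin k → Matrix (Fin n) (Fin n) F) → (Fin k → Matrix (Fin n) (Fin n) F) → Prop :=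
  fun A B => ∃ g : GL (Fin n) F, ∀ i, B i =
    (g : Matrix (Fin n) (Fin n) F) * A i *
      ((g⁻¹ : GL (Fin n) F) : Matrix (Fin n) (Fin n) F)

private lemma key (u : GL (Fin n) F) (a : Matrix (Fin n) (Fin n) F) :
    ((u⁻¹ : GL (Fin n) F) : Matrix (Fin n) (Fin n) F) *
        ((u : Matrix (Fin n) (Fin n) F) * a * ((u⁻¹ : GL (Fin n) F) : Matrix (Fin n) (Fin n) F)) *
        (u : Matrix (Fin n) (Fin n) F) = a := by
  have h1 := u.inv_mul
  calc ((u⁻¹ : GL (Fin n) F) : Matrix (Fin n) (Fin n) F) *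
        ((u : Matrix (Fin n) (Fin n) F) * a * ((u⁻¹ : GL (Fin n) F) : Matrix (Fin n) (Fin n) F)) *
        (u : Matrix (Fin n) (Fin n) F)
      = (((u⁻¹ : GL (Fin n) F) : Matrix (Fin n) (Fin n) F) * (u : Matrix (Fin n) (Fin n) F)) *
          (a * (((u⁻¹ : GL (Fin n) F) : Matrix (Fin n) (Fin n) F) * (u : Matrix (Fin n) (Fin n) F))) := by
        simp only [mul_assoc]
    _ = a := by rw [h1, one_mul, mul_one]

private lemma rel_equiv : Equivalence (rel n F k) := by
  constructor
  · intro A; exact ⟨1, by simp⟩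
  · rintro A B ⟨g, h⟩
    refine ⟨g⁻¹, fun i => ?_⟩
    rw [inv_inv, h i, key]
  · rintro A B C ⟨g, hg⟩ ⟨h, hh⟩
    refine ⟨h * g, fun i => ?_⟩
    rw [hh i, hg i, mul_inv_rev, Units.val_mul, Units.val_mul]
    simp only [mul_assoc]

private lemma card_le : Nat.card (Fin k → Matrix (Fin n) (Fin n) F) ≤
    Nat.card (Quot (rel n F k)) * Nat.card (GL (Fin n) F) := by
  classical
  have hch : ∀ x : Fin k → Matrix (Fin n) (Fin n) F,
      rel n F k (Quot.out (Quot.mk (rel n F k) x)) x := by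
    intro x
    have := Quot.eqvGen_exact (r := rel n F k) (Quot.out_eq (Quot.mk (rel n F k) x))
    exact (rel_equiv.eqvGen_iff).mp this
  set f : (Fin k → Matrix (Fin n) (Fin n) F) → Quot (rel n F k) × GL (Fin n) F :=
    fun x => (Quot.mk _ x, (hch x).choose) with hf
  have hinj : Function.Injective f := by
    intro x y hxy
    have h1 : Quot.mk (rel n F k) x = Quot.mk (rel n F k) y := congrArg Prod.fst hxy
    have h2 : (hch x).choose = (hch y).choose := congrArg Prod.snd hxy
    have h3 : (Quot.mk (rel n F k) x).out = (Quot.mk (rel n F k) y).out :=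
      congrArg Quot.out h1
    funext i
    have hx := (hch x).choose_spec i
    have hy := (hch y).choose_spec i
    rw [hx, hy, congrFun h3 i, h2]
  calc Nat.card (Fin k → Matrix (Fin n) (Fin n) F)
      ≤ Nat.card (Quot (rel n F k) × GL (Fin n) F) := Nat.card_le_card_of_injective f hinj
    _ = _ := Nat.card_prod _ _

end Aux

/-- For fixed `n ≥ 1` and `q`, the number `a(n,k,q)` of simultaneous similarity
classes of `k`-tuples of `n × n` matrices over `F_q` is asymptotically
`q^(n² k)` up to constants: there exist `m₁, m₂ > 0` with
`m₁ q^(n²k) ≤ a(n,k,q) ≤ m₂ q^(n²k)` for all large `k`. -/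
theorem stmt4 (n q : ℕ) (hn : 1 ≤ n) (F : Type) [Field F] [Fintype F]
    (hF : Fintype.card F = q) :
    ∃ m₁ m₂ : ℝ, 0 < m₁ ∧ 0 < m₂ ∧ ∃ K : ℕ, ∀ k : ℕ, K ≤ k →
      m₁ * (q : ℝ) ^ (n ^ 2 * k) ≤
        (Nat.card (Quot (fun A B : Fin k → Matrix (Fin n) (Fin n) F =>
          ∃ g : GL (Fin n) F, ∀ i, B i =
            (g : Matrix (Fin n) (Fin n) F) * A i *
              ((g⁻¹ : GL (Fin n) F) : Matrix (Fin n) (Fin n) F))) : ℝ) ∧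
      (Nat.card (Quot (fun A B : Fin k → Matrix (Fin n) (Fin n) F =>
          ∃ g : GL (Fin n) F, ∀ i, B i =
            (g : Matrix (Fin n) (Fin n) F) * A i *
              ((g⁻¹ : GL (Fin n) F) : Matrix (Fin n) (Fin n) F))) : ℝ) ≤
        m₂ * (q : ℝ) ^ (n ^ 2 * k) := by
  have hq : 0 < q := hF ▸ Fintype.card_pos
  have hc : 0 < Nat.card (GL (Fin n) F) := Nat.card_pos
  refine ⟨1 / Nat.card (GL (Fin n) F), 1, by positivity, one_pos, 0, fun k _ => ?_⟩
  have hcardX : Nat.card (Fin k → Matrix (Fin n) (Fin n) F) = q ^ (n ^ 2 * k) := by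
    have hm : Nat.card (Matrix (Fin n) (Fin n) F) = q ^ n ^ 2 := by
      show Nat.card (Fin n → Fin n → F) = q ^ n ^ 2
      simp [Nat.card_fun, Nat.card_eq_fintype_card, hF, pow_two, pow_mul]
    rw [Nat.card_fun, hm]
    simp [Nat.card_eq_fintype_card, pow_mul]
  have hle : q ^ (n ^ 2 * k) ≤
      Nat.card (Quot (rel n F k)) * Nat.card (GL (Fin n) F) := hcardX ▸ card_le
  have hub : Nat.card (Quot (rel n F k)) ≤ q ^ (n ^ 2 * k) := by
    rw [← hcardX]
    exact Nat.card_le_card_of_surjective _ (fun b => Quot.exists_rep b)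
  constructor
  · have h1 : (q : ℝ) ^ (n ^ 2 * k) ≤
        (Nat.card (Quot (rel n F k)) : ℝ) * (Nat.card (GL (Fin n) F) : ℝ) := by
      exact_mod_cast hle
    rw [div_mul_eq_mul_div, one_mul, div_le_iff₀ (by exact_mod_cast hc)]
    exact h1
  · rw [one_mul]
    exact_mod_cast hub
end

section
/- Let n = 2l be even and define A₁ = [[0,I_l],[0,0]] (block form with l×l blocks) and, for 2 ≤ i ≤ l+1, A_i = [[0,N_i],[0,0]] where N_i is the l×l matrix whose only nonzero row is the last row, equal to the standard basis row vector e_{i-1}. Then the matrices A₁,...,A_{l+1} pairwise commute, and their common centralizer in M_n(F_q) is {a₀·I_n + [[0,B],[0,0]] : a₀ ∈ F_q, B ∈ M_l(F_q)}, a commutative subalgebra of dimension l² + 1. -/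
set_option synthInstance.maxHeartbeats 1000000
set_option maxHeartbeats 1000000

open Matrix

section aux

variable {l : ℕ} {F : Type} [Field F]

private lemma upperProd (B N : Matrix (Fin l) (Fin l) F) :
    fromBlocks 0 B 0 0 * fromBlocks 0 N 0 0 =
      (0 : Matrix (Fin l ⊕ Fin l) (Fin l ⊕ Fin l) F) := by
  rw [fromBlocks_multiply, ← fromBlocks_zero]; simp

private lemma upperComm (a : F) (B N : Matrix (Fin l) (Fin l) F) :
    (a • (1 : Matrix (Fin l ⊕ Fin l) (Fin l ⊕ Fin l) F) + fromBlocks 0 B 0 0) *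
      fromBlocks 0 N 0 0 =
    fromBlocks 0 N 0 0 *
      (a • (1 : Matrix (Fin l ⊕ Fin l) (Fin l ⊕ Fin l) F) + fromBlocks 0 B 0 0) := by
  rw [add_mul, mul_add, upperProd, upperProd, smul_mul_assoc, mul_smul_comm, one_mul, mul_one]

private lemma decomp (a : F) (B : Matrix (Fin l) (Fin l) F) :
    a • (1 : Matrix (Fin l ⊕ Fin l) (Fin l ⊕ Fin l) F) + fromBlocks 0 B 0 0 =
      fromBlocks (a • 1) B 0 (a • 1) := by
  rw [← fromBlocks_one, fromBlocks_smul, fromBlocks_add]; simp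

private lemma fb_add (B C : Matrix (Fin l) (Fin l) F) :
    fromBlocks 0 (B + C) 0 0 =
      (fromBlocks 0 B 0 0 : Matrix (Fin l ⊕ Fin l) (Fin l ⊕ Fin l) F) + fromBlocks 0 C 0 0 := by
  rw [fromBlocks_add]; simp

private lemma fb_smul (a : F) (B : Matrix (Fin l) (Fin l) F) :
    fromBlocks 0 (a • B) 0 0 =
      a • (fromBlocks 0 B 0 0 : Matrix (Fin l ⊕ Fin l) (Fin l ⊕ Fin l) F) := by
  rw [fromBlocks_smul]; simp

end aux

/-- Even case `n = 2l`: the explicit commuting tuple `(A₁, …, A_{l+1})` has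
common centralizer `{a₀·I + [[0,B],[0,0]]}`, a commutative subalgebra of
dimension `l² + 1`. -/
theorem stmt5 (l q : ℕ) (hl : 0 < l) (F : Type) [Field F] [Fintype F]
    (hF : Fintype.card F = q)
    (A : Fin (l + 1) → Matrix (Fin l ⊕ Fin l) (Fin l ⊕ Fin l) F)
    (hA0 : A 0 = Matrix.fromBlocks 0 (1 : Matrix (Fin l) (Fin l) F) 0 0)
    (hAs : ∀ j : Fin l, A j.succ = Matrix.fromBlocks 0
      (fun r c : Fin l => if r.val = l - 1 ∧ c = j then (1 : F) else 0) 0 0) :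
    (∀ i j, Commute (A i) (A j)) ∧
    (Subalgebra.centralizer F (Set.range A) :
        Set (Matrix (Fin l ⊕ Fin l) (Fin l ⊕ Fin l) F)) =
      {x | ∃ (a₀ : F) (B : Matrix (Fin l) (Fin l) F),
        x = a₀ • (1 : Matrix (Fin l ⊕ Fin l) (Fin l ⊕ Fin l) F) +
          Matrix.fromBlocks 0 B 0 0} ∧
    (∀ x ∈ Subalgebra.centralizer F (Set.range A),
      ∀ y ∈ Subalgebra.centralizer F (Set.range A), x * y = y * x) ∧
    Module.finrank F (Subalgebra.centralizer F (Set.range A) :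
      Subalgebra F (Matrix (Fin l ⊕ Fin l) (Fin l ⊕ Fin l) F)) = l ^ 2 + 1 := by
  set L : Fin l := ⟨l - 1, by omega⟩ with hLdef
  have hkL : ∀ k : Fin l, k.val = l - 1 ↔ k = L := fun k =>
    ⟨fun h => Fin.ext h, fun h => h ▸ rfl⟩
  -- every A i has the form fromBlocks 0 N 0 0
  have hform : ∀ i : Fin (l + 1), ∃ N, A i = fromBlocks 0 N 0 0 := by
    intro i
    rcases Fin.eq_zero_or_eq_succ i with hi | ⟨j, hj⟩
    · exact ⟨1, by rw [hi, hA0]⟩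
    · exact ⟨_, by rw [hj, hAs j]; rfl⟩
  -- commuting
  have hcomm : ∀ i j, Commute (A i) (A j) := by
    intro i j
    obtain ⟨N, hN⟩ := hform i
    obtain ⟨M, hM⟩ := hform j
    unfold Commute SemiconjBy
    rw [hN, hM, upperProd, upperProd]
  -- the set equality
  have hset : (Subalgebra.centralizer F (Set.range A) :
        Set (Matrix (Fin l ⊕ Fin l) (Fin l ⊕ Fin l) F)) =
      {x | ∃ (a₀ : F) (B : Matrix (Fin l) (Fin l) F),
        x = a₀ • (1 : Matrix (Fin l ⊕ Fin l) (Fin l ⊕ Fin l) F) +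
          Matrix.fromBlocks 0 B 0 0} := by
    ext x
    simp only [SetLike.mem_coe, Subalgebra.mem_centralizer_iff, Set.forall_mem_range,
      Set.mem_setOf_eq]
    constructor
    · intro h
      obtain ⟨p, q', r, s, rfl⟩ : ∃ p q' r s, x = fromBlocks p q' r s :=
        ⟨_, _, _, _, (fromBlocks_toBlocks x).symm⟩
      have h0 := h 0
      rw [hA0, fromBlocks_multiply, fromBlocks_multiply, fromBlocks_inj] at h0
      obtain ⟨e11, e12, _, _⟩ := h0
      simp only [Matrix.zero_mul, Matrix.mul_zero, zero_add, add_zero, Matrix.one_mul,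
        Matrix.mul_one] at e11 e12
      -- e11 : r = 0, e12 : s = p
      have hj : ∀ j : Fin l,
          (Matrix.of fun r c : Fin l => if r.val = l - 1 ∧ c = j then (1 : F) else 0) * s =
          p * (Matrix.of fun r c : Fin l => if r.val = l - 1 ∧ c = j then (1 : F) else 0) := by
        intro j
        have hjj := h j.succ
        rw [hAs j] at hjj
        change fromBlocks 0 (Matrix.of fun r c : Fin l => if r.val = l - 1 ∧ c = j then (1 : F) else 0) 0 0 * fromBlocks p q' r s = fromBlocks p q' r s * fromBlocks 0 (Matrix.of fun r c : Fin l => if r.val = l - 1 ∧ c = j then (1 : F) else 0) 0 0 at hjj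
        rw [fromBlocks_multiply, fromBlocks_multiply, fromBlocks_inj] at hjj
        obtain ⟨_, e12', _, _⟩ := hjj
        simpa using e12'
      have key : ∀ (j b : Fin l), p j b = if b = j then p L L else 0 := by
        intro j b
        have e := congrFun (congrFun (hj j) L) b
        simp only [mul_apply, Matrix.of_apply, hkL, ite_and] at e
        rw [e12] at e
        simpa [Finset.sum_ite_eq', Finset.sum_ite_eq] using e
      subst e11
      set c := p L L with hc
      have hp : p = c • (1 : Matrix (Fin l) (Fin l) F) := by
        ext j b
        rw [key j b, Matrix.smul_apply, Matrix.one_apply]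
        by_cases hbj : b = j
        · subst hbj; simp
        · simp [hbj, Ne.symm hbj]
      exact ⟨c, q', by rw [decomp, e12, hp]⟩
    · rintro ⟨a, B, rfl⟩ i
      obtain ⟨N, hN⟩ := hform i
      rw [hN]
      exact (upperComm a B N).symm
  refine ⟨hcomm, hset, ?_, ?_⟩
  · intro x hx y hy
    have hx' : x ∈ {x | ∃ (a₀ : F) (B : Matrix (Fin l) (Fin l) F),
        x = a₀ • (1 : Matrix (Fin l ⊕ Fin l) (Fin l ⊕ Fin l) F) +
          Matrix.fromBlocks 0 B 0 0} := hset ▸ hx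
    have hy' : y ∈ {x | ∃ (a₀ : F) (B : Matrix (Fin l) (Fin l) F),
        x = a₀ • (1 : Matrix (Fin l ⊕ Fin l) (Fin l ⊕ Fin l) F) +
          Matrix.fromBlocks 0 B 0 0} := hset ▸ hy
    obtain ⟨a, B, rfl⟩ := hx'
    obtain ⟨b, C, rfl⟩ := hy'
    rw [decomp, decomp, fromBlocks_multiply, fromBlocks_multiply, fromBlocks_inj]
    refine ⟨?_, ?_, ?_, ?_⟩ <;>
      simp [smul_smul, mul_comm, smul_mul_assoc, mul_smul_comm, add_comm]
  · -- finrank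
    have hmem : ∀ (a : F) (B : Matrix (Fin l) (Fin l) F),
        a • (1 : Matrix (Fin l ⊕ Fin l) (Fin l ⊕ Fin l) F) + fromBlocks 0 B 0 0 ∈
          Subalgebra.centralizer F (Set.range A) := by
      intro a B
      have : a • (1 : Matrix (Fin l ⊕ Fin l) (Fin l ⊕ Fin l) F) + fromBlocks 0 B 0 0 ∈
          {x | ∃ (a₀ : F) (B : Matrix (Fin l) (Fin l) F),
            x = a₀ • (1 : Matrix (Fin l ⊕ Fin l) (Fin l ⊕ Fin l) F) +
              Matrix.fromBlocks 0 B 0 0} := ⟨a, B, rfl⟩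
      rw [← hset] at this
      exact this
    let φ : (F × Matrix (Fin l) (Fin l) F) →ₗ[F]
        (Subalgebra.centralizer F (Set.range A) :
          Subalgebra F (Matrix (Fin l ⊕ Fin l) (Fin l ⊕ Fin l) F)) :=
      { toFun := fun z => ⟨z.1 • 1 + fromBlocks 0 z.2 0 0, hmem z.1 z.2⟩
        map_add' := by
          intro z w
          apply Subtype.ext
          push_cast
          show (z.1 + w.1) • (1 : Matrix (Fin l ⊕ Fin l) (Fin l ⊕ Fin l) F) +
              fromBlocks 0 (z.2 + w.2) 0 0 =
            (z.1 • 1 + fromBlocks 0 z.2 0 0) + (w.1 • 1 + fromBlocks 0 w.2 0 0)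
          rw [add_smul, fb_add]
          abel
        map_smul' := by
          intro c z
          apply Subtype.ext
          push_cast
          show (c * z.1) • (1 : Matrix (Fin l ⊕ Fin l) (Fin l ⊕ Fin l) F) +
              fromBlocks 0 (c • z.2) 0 0 =
            c • (z.1 • 1 + fromBlocks 0 z.2 0 0)
          rw [mul_smul, fb_smul, smul_add] }
    have hφbij : Function.Bijective φ := by
      constructor
      · intro z w hzw
        have h1 : z.1 • (1 : Matrix (Fin l ⊕ Fin l) (Fin l ⊕ Fin l) F) +
            fromBlocks 0 z.2 0 0 = w.1 • 1 + fromBlocks 0 w.2 0 0 :=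
          congrArg Subtype.val hzw
        rw [decomp, decomp, fromBlocks_inj] at h1
        obtain ⟨c11, c12, _, _⟩ := h1
        have hz1 : z.1 = w.1 := by
          have := congrFun (congrFun c11 ⟨0, hl⟩) ⟨0, hl⟩
          simpa [Matrix.one_apply] using this
        exact Prod.ext hz1 c12
      · rintro ⟨x, hx⟩
        have hx' : x ∈ {x | ∃ (a₀ : F) (B : Matrix (Fin l) (Fin l) F),
            x = a₀ • (1 : Matrix (Fin l ⊕ Fin l) (Fin l ⊕ Fin l) F) +
              Matrix.fromBlocks 0 B 0 0} := hset ▸ hx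
        obtain ⟨a, B, hxe⟩ := hx'
        exact ⟨(a, B), Subtype.ext hxe.symm⟩
    have e := LinearEquiv.ofBijective φ hφbij
    rw [← e.finrank_eq, Module.finrank_prod, Module.finrank_self, Module.finrank_matrix]
    simp [sq, Nat.add_comm]
end

section
/- For every n ≥ 2 and prime power q, there exists a tuple of ⌊n/2⌋ + 1 pairwise commuting matrices in M_n(F_q) whose common centralizer algebra is a commutative subalgebra of M_n(F_q) of dimension ⌊n²/4⌋ + 1. -/
namespace Stmt7Aux

variable {F : Type} [Field F]

section defs
variable (F) (n k : ℕ)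

/-- The "shift by k" matrix: 1's at entries (a, a+k). -/
def shiftM : Matrix (Fin n) (Fin n) F :=
  Matrix.of fun a c => if (a : ℕ) + k = (c : ℕ) then 1 else 0

/-- Matrix with a single 1 at entry (k-1, t). -/
def eM (t : ℕ) : Matrix (Fin n) (Fin n) F :=
  Matrix.of fun a c => if (a : ℕ) = k - 1 ∧ (c : ℕ) = t then 1 else 0

/-- Support predicate: nonzero only in the top-right block. -/
def BlockSupp (M : Matrix (Fin n) (Fin n) F) : Prop :=
  ∀ a c : Fin n, M a c ≠ 0 → (a : ℕ) < k ∧ k ≤ (c : ℕ)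

/-- Membership predicate for the centralizer algebra. -/
def P (x : Matrix (Fin n) (Fin n) F) : Prop :=
  (∀ a c : Fin n, a ≠ c → ¬((a : ℕ) < k ∧ k ≤ (c : ℕ)) → x a c = 0) ∧
  (∀ a c : Fin n, x a a = x c c)

end defs

variable {n k : ℕ}

lemma mul_eq_zero_of_blockSupp {M M' : Matrix (Fin n) (Fin n) F}
    (hM : BlockSupp F n k M) (hM' : BlockSupp F n k M') : M * M' = 0 := by
  ext a c
  rw [Matrix.mul_apply]
  apply Finset.sum_eq_zero
  intro j _
  by_cases h : M a j = 0
  · simp [h]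
  · have h2 : M' j c = 0 := by
      by_contra h3
      exact absurd ((hM' j c h3).1) (not_lt.2 (hM a j h).2)
    simp [h2]

lemma blockSupp_shiftM (hkl : k + (n - k) = n) (hlk : n - k ≤ k) :
    BlockSupp F n k (shiftM F n k) := by
  intro a c h
  simp only [shiftM, Matrix.of_apply, ne_eq, ite_eq_right_iff, one_ne_zero] at h
  have hc : (c : ℕ) < n := c.2
  by_cases hcond : (a : ℕ) + k = (c : ℕ)
  · omega
  · simp [hcond] at h

lemma blockSupp_eM {t : ℕ} (hk : 1 ≤ k) (ht : k ≤ t) :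
    BlockSupp F n k (eM F n k t) := by
  intro a c h
  simp only [eM, Matrix.of_apply, ne_eq, ite_eq_right_iff, one_ne_zero] at h
  by_cases hcond : (a : ℕ) = k - 1 ∧ (c : ℕ) = t
  · omega
  · simp [hcond] at h

/-- Summation helper: sum over j of `if (j:ℕ) = t then f j else 0`. -/
lemma sum_ite_val {t : ℕ} (f : Fin n → F) :
    (∑ j : Fin n, if (j : ℕ) = t then f j else 0)
      = if h : t < n then f ⟨t, h⟩ else 0 := by
  split
  · next h =>
    rw [Finset.sum_eq_single_of_mem ⟨t, h⟩ (Finset.mem_univ _)]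
    · simp
    · intro b _ hb
      have : (b : ℕ) ≠ t := fun hbt => hb (Fin.ext hbt)
      simp [this]
  · next h =>
    apply Finset.sum_eq_zero
    intro j _
    have : (j : ℕ) ≠ t := by have := j.2; omega
    simp [this]

end Stmt7Aux

namespace Stmt7Aux

variable {F : Type} [Field F] {n k : ℕ} (x : Matrix (Fin n) (Fin n) F)

lemma mul_shift_entry (a c : Fin n) :
    (x * shiftM F n k) a c
      = if h : k ≤ (c : ℕ) then x a ⟨(c : ℕ) - k, by omega⟩ else 0 := by
  rw [Matrix.mul_apply]
  split
  · next h =>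
    have key : ∀ j : Fin n, x a j * shiftM F n k j c
        = if (j : ℕ) = (c : ℕ) - k then x a j else 0 := by
      intro j
      simp only [shiftM, Matrix.of_apply, mul_ite, mul_one, mul_zero]
      by_cases hj : (j : ℕ) + k = (c : ℕ)
      · have hj' : (j : ℕ) = (c : ℕ) - k := by omega
        simp [hj, hj', Nat.sub_add_cancel h]
      · have hj' : (j : ℕ) ≠ (c : ℕ) - k := by omega
        simp [hj, hj']
    rw [Finset.sum_congr rfl (fun j _ => key j), sum_ite_val]
    have hlt : (c : ℕ) - k < n := by have := c.2; omega
    simp [hlt]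
  · next h =>
    apply Finset.sum_eq_zero
    intro j _
    have hj : (j : ℕ) + k ≠ (c : ℕ) := by omega
    simp [shiftM, hj]

lemma shift_mul_entry (a c : Fin n) :
    (shiftM F n k * x) a c
      = if h : (a : ℕ) + k < n then x ⟨(a : ℕ) + k, h⟩ c else 0 := by
  rw [Matrix.mul_apply]
  have key : ∀ j : Fin n, shiftM F n k a j * x j c
      = if (j : ℕ) = (a : ℕ) + k then x j c else 0 := by
    intro j
    simp only [shiftM, Matrix.of_apply, ite_mul, one_mul, zero_mul]
    by_cases hj : (a : ℕ) + k = (j : ℕ)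
    · simp [hj]
    · have hj' : (j : ℕ) ≠ (a : ℕ) + k := fun h => hj h.symm
      simp [hj, hj']
  rw [Finset.sum_congr rfl (fun j _ => key j), sum_ite_val]

lemma mul_eM_entry (t : ℕ) (hk1 : k - 1 < n) (a c : Fin n) :
    (x * eM F n k t) a c
      = if (c : ℕ) = t then x a ⟨k - 1, hk1⟩ else 0 := by
  rw [Matrix.mul_apply]
  by_cases hc : (c : ℕ) = t
  · have key : ∀ j : Fin n, x a j * eM F n k t j c
        = if (j : ℕ) = k - 1 then x a j else 0 := by
      intro j
      simp only [eM, Matrix.of_apply, mul_ite, mul_one, mul_zero, hc, and_true]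
    rw [Finset.sum_congr rfl (fun j _ => key j), sum_ite_val, dif_pos hk1, if_pos hc]
  · rw [if_neg hc]
    apply Finset.sum_eq_zero
    intro j _
    simp [eM, hc]

lemma eM_mul_entry (t : ℕ) (ht : t < n) (a c : Fin n) :
    (eM F n k t * x) a c
      = if (a : ℕ) = k - 1 then x ⟨t, ht⟩ c else 0 := by
  rw [Matrix.mul_apply]
  by_cases ha : (a : ℕ) = k - 1
  · have key : ∀ j : Fin n, eM F n k t a j * x j c
        = if (j : ℕ) = t then x j c else 0 := by
      intro j
      simp only [eM, Matrix.of_apply, ite_mul, one_mul, zero_mul, ha, true_and]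
    rw [Finset.sum_congr rfl (fun j _ => key j), sum_ite_val, dif_pos ht, if_pos ha]
  · rw [if_neg ha]
    apply Finset.sum_eq_zero
    intro j _
    simp [eM, ha]

end Stmt7Aux

namespace Stmt7Aux

variable {F : Type} [Field F] {n k : ℕ} {x : Matrix (Fin n) (Fin n) F}

lemma centralizer_P (hkn : k < n) (hn2k : n ≤ 2 * k) (h2kn : 2 * k ≤ n + 1)
    (hS : shiftM F n k * x = x * shiftM F n k)
    (hE : ∀ t, k ≤ t → t < n → eM F n k t * x = x * eM F n k t) :
    P F n k x := by
  have hk1n : k - 1 < n := by omega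
  have S : ∀ a c : Fin n,
      (if h : (a : ℕ) + k < n then x ⟨(a : ℕ) + k, h⟩ c else 0)
        = (if h : k ≤ (c : ℕ) then x a ⟨(c : ℕ) - k, by have := c.2; omega⟩ else 0) := by
    intro a c
    have h := congrFun (congrFun hS a) c
    rwa [shift_mul_entry, mul_shift_entry] at h
  have E : ∀ (t : ℕ) (ht : t < n), k ≤ t → ∀ a c : Fin n,
      (if (a : ℕ) = k - 1 then x ⟨t, ht⟩ c else 0)
        = (if (c : ℕ) = t then x a ⟨k - 1, hk1n⟩ else 0) := by
    intro t ht htk a c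
    have h := congrFun (congrFun (hE t htk ht) a) c
    rwa [eM_mul_entry x t ht a c, mul_eM_entry x t hk1n a c] at h
  have rowkill : ∀ a c : Fin n, k ≤ (a : ℕ) → a ≠ c → x a c = 0 := by
    intro a c hka hac
    have h := E (a : ℕ) a.2 hka ⟨k - 1, hk1n⟩ c
    have hca : (c : ℕ) ≠ (a : ℕ) := fun hh => hac (Fin.ext hh.symm)
    rw [if_pos rfl, if_neg hca] at h
    simpa using h
  have colkill : ∀ a : Fin n, (a : ℕ) ≠ k - 1 → x a ⟨k - 1, hk1n⟩ = 0 := by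
    intro a ha
    have h := E k hkn le_rfl a ⟨k, hkn⟩
    rw [if_neg ha, if_pos rfl] at h
    exact h.symm
  have diagk : ∀ (t : ℕ) (ht : t < n), k ≤ t →
      x ⟨t, ht⟩ ⟨t, ht⟩ = x ⟨k - 1, hk1n⟩ ⟨k - 1, hk1n⟩ := by
    intro t ht htk
    have h := E t ht htk ⟨k - 1, hk1n⟩ ⟨t, ht⟩
    rw [if_pos rfl, if_pos rfl] at h
    exact h
  have shiftrel : ∀ (a c : Fin n) (h1 : (a : ℕ) + k < n) (h2 : (c : ℕ) + k < n),
      x a c = x ⟨(a : ℕ) + k, h1⟩ ⟨(c : ℕ) + k, h2⟩ := by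
    intro a c h1 h2
    have h := S a ⟨(c : ℕ) + k, h2⟩
    rw [dif_pos h1, dif_pos (by simp : k ≤ ((⟨(c : ℕ) + k, h2⟩ : Fin n) : ℕ))] at h
    have hc : (⟨((⟨(c : ℕ) + k, h2⟩ : Fin n) : ℕ) - k, by omega⟩ : Fin n) = c := by
      apply Fin.ext; simp
    rw [hc] at h
    exact h.symm
  have shiftkill : ∀ (a c : Fin n), n ≤ (a : ℕ) + k → (c : ℕ) + k < n → x a c = 0 := by
    intro a c h1 h2
    have h := S a ⟨(c : ℕ) + k, h2⟩
    rw [dif_neg (by omega), dif_pos (by simp : k ≤ ((⟨(c : ℕ) + k, h2⟩ : Fin n) : ℕ))] at h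
    have hc : (⟨((⟨(c : ℕ) + k, h2⟩ : Fin n) : ℕ) - k, by omega⟩ : Fin n) = c := by
      apply Fin.ext; simp
    rw [hc] at h
    exact h.symm
  constructor
  · intro a c hac hblock
    have hac' : (a : ℕ) ≠ (c : ℕ) := fun hh => hac (Fin.ext hh)
    have hcv := c.2
    have hav := a.2
    by_cases hka : k ≤ (a : ℕ)
    · exact rowkill a c hka hac
    · push_neg at hka
      have hck : (c : ℕ) < k := by
        by_contra hck
        exact hblock ⟨hka, by omega⟩
      by_cases hck1 : (c : ℕ) = k - 1
      · have : c = (⟨k - 1, hk1n⟩ : Fin n) := Fin.ext hck1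
        rw [this]
        exact colkill a (by omega)
      · have hcl : (c : ℕ) + k < n := by omega
        by_cases hal : (a : ℕ) + k < n
        · rw [shiftrel a c hal hcl]
          exact rowkill _ _ (by simp) (by simp [Fin.ext_iff]; omega)
        · exact shiftkill a c (by omega) hcl
  · have key : ∀ a : Fin n, x a a = x ⟨k - 1, hk1n⟩ ⟨k - 1, hk1n⟩ := by
      intro a
      by_cases hka : k ≤ (a : ℕ)
      · have : a = (⟨(a : ℕ), a.2⟩ : Fin n) := Fin.ext rfl
        rw [this]
        exact diagk (a : ℕ) a.2 hka
      · push_neg at hka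
        by_cases hal : (a : ℕ) + k < n
        · rw [shiftrel a a hal hal]
          exact diagk _ _ (by simp)
        · have : a = (⟨k - 1, hk1n⟩ : Fin n) := Fin.ext (by simp; omega)
          rw [this]
    intro a c
    rw [key a, key c]

end Stmt7Aux

namespace Stmt7Aux

variable {F : Type} [Field F] {n k : ℕ}

lemma P_sub_smul_one (h0 : 0 < n) {x : Matrix (Fin n) (Fin n) F} (hx : P F n k x) :
    BlockSupp F n k (x - x ⟨0, h0⟩ ⟨0, h0⟩ • 1) := by
  intro a c hne
  by_contra hb
  apply hne
  have h1 : (1 : Matrix (Fin n) (Fin n) F) a c = if a = c then 1 else 0 :=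
    Matrix.one_apply
  by_cases hac : a = c
  · subst hac
    simp only [Matrix.sub_apply, Matrix.smul_apply, h1, if_pos rfl, smul_eq_mul, mul_one]
    rw [hx.2 a ⟨0, h0⟩]
    simp
  · simp only [Matrix.sub_apply, Matrix.smul_apply, h1, if_neg hac, smul_eq_mul, mul_zero]
    rw [hx.1 a c hac hb]
    ring

lemma P_mul_comm (h0 : 0 < n) {x y : Matrix (Fin n) (Fin n) F}
    (hx : P F n k x) (hy : P F n k y) : x * y = y * x := by
  set v := x ⟨0, h0⟩ ⟨0, h0⟩ with hv
  set w := y ⟨0, h0⟩ ⟨0, h0⟩ with hw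
  have hN := P_sub_smul_one h0 hx
  have hM := P_sub_smul_one h0 hy
  have hNM : (x - v • 1) * (y - w • 1) = 0 := mul_eq_zero_of_blockSupp hN hM
  have hMN : (y - w • 1) * (x - v • 1) = 0 := mul_eq_zero_of_blockSupp hM hN
  have expand : ∀ (a b : Matrix (Fin n) (Fin n) F) (s t : F),
      (a - s • 1) * (b - t • 1) = a * b - t • a - s • b + (s * t) • 1 := by
    intro a b s t
    simp only [sub_mul, mul_sub, smul_mul_assoc, mul_smul_comm, one_mul, mul_one,
      smul_smul]
    module
  rw [expand] at hNM hMN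
  have h1 : x * y = w • x + v • y - (v * w) • 1 := by
    rw [← sub_eq_zero, ← hNM]; abel
  have h2 : y * x = v • y + w • x - (w * v) • 1 := by
    rw [← sub_eq_zero, ← hMN]; abel
  rw [h1, h2, mul_comm v w]
  abel

lemma P_commutes_blockSupp (h0 : 0 < n) {x g : Matrix (Fin n) (Fin n) F}
    (hx : P F n k x) (hg : BlockSupp F n k g) : g * x = x * g := by
  set v := x ⟨0, h0⟩ ⟨0, h0⟩ with hv
  have hN := P_sub_smul_one h0 hx
  have hgN : g * (x - v • 1) = 0 := mul_eq_zero_of_blockSupp hg hN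
  have hNg : (x - v • 1) * g = 0 := mul_eq_zero_of_blockSupp hN hg
  have h1 : g * x = v • g := by
    rw [mul_sub, mul_smul_comm, mul_one, sub_eq_zero] at hgN
    exact hgN
  have h2 : x * g = v • g := by
    rw [sub_mul, smul_mul_assoc, one_mul, sub_eq_zero] at hNg
    exact hNg
  rw [h1, h2]

/-- The candidate centralizer as a submodule. -/
def W (F : Type) [Field F] (n k : ℕ) : Submodule F (Matrix (Fin n) (Fin n) F) where
  carrier := {x | P F n k x}
  add_mem' := by
    rintro a b ⟨ha1, ha2⟩ ⟨hb1, hb2⟩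
    refine ⟨fun i j hij hb => ?_, fun i j => ?_⟩
    · simp [Matrix.add_apply, ha1 i j hij hb, hb1 i j hij hb]
    · simp [Matrix.add_apply, ha2 i j, hb2 i j]
  zero_mem' := ⟨fun _ _ _ _ => rfl, fun _ _ => rfl⟩
  smul_mem' := by
    rintro s a ⟨ha1, ha2⟩
    refine ⟨fun i j hij hb => ?_, fun i j => ?_⟩
    · simp [Matrix.smul_apply, ha1 i j hij hb]
    · simp [Matrix.smul_apply, ha2 i j]

end Stmt7Aux

namespace Stmt7Aux

variable {F : Type} [Field F]

/-- Linear equivalence between `W` and its coordinates. -/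
noncomputable def wEquiv (F : Type) [Field F] (n k : ℕ) (hk1 : 1 ≤ k) (hkn : k < n) :
    W F n k ≃ₗ[F] F × Matrix (Fin k) (Fin (n - k)) F where
  toFun x := (x.1 ⟨0, by omega⟩ ⟨0, by omega⟩,
    Matrix.of fun a b => x.1 ⟨a.1, by have := a.2; omega⟩ ⟨k + b.1, by have := b.2; omega⟩)
  map_add' x y := rfl
  map_smul' s x := rfl
  invFun p := ⟨Matrix.of fun a c =>
      if h : (a : ℕ) < k ∧ k ≤ (c : ℕ) then
        p.2 ⟨a.1, h.1⟩ ⟨(c : ℕ) - k, by have := c.2; omega⟩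
      else if a = c then p.1 else 0, by
    constructor
    · intro a c hac hb
      simp only [Matrix.of_apply, dif_neg hb, if_neg hac]
    · intro a c
      have ha : ¬((a : ℕ) < k ∧ k ≤ (a : ℕ)) := by omega
      have hc : ¬((c : ℕ) < k ∧ k ≤ (c : ℕ)) := by omega
      simp only [Matrix.of_apply, dif_neg ha, dif_neg hc, if_pos rfl]⟩
  left_inv x := by
    apply Subtype.ext
    ext a c
    simp only [Matrix.of_apply]
    by_cases h : (a : ℕ) < k ∧ k ≤ (c : ℕ)
    · rw [dif_pos h]
      have e2 : k + ((c : ℕ) - k) = (c : ℕ) := by omega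
      simp [e2]
    · rw [dif_neg h]
      by_cases hac : a = c
      · subst hac
        rw [if_pos rfl]
        exact (x.2.2 a ⟨0, by omega⟩).symm
      · rw [if_neg hac]
        exact (x.2.1 a c hac h).symm
  right_inv p := by
    refine Prod.ext ?_ ?_
    · have h : ¬((0 : ℕ) < k ∧ k ≤ (0 : ℕ)) := by omega
      simp only [Matrix.of_apply]
      rw [dif_neg (by simpa using h)]
      simp
    · ext a b
      have h : ((⟨a.1, by have := a.2; omega⟩ : Fin n) : ℕ) < k ∧
          k ≤ ((⟨k + b.1, by have := b.2; omega⟩ : Fin n) : ℕ) := by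
        constructor
        · exact a.2
        · simp
      simp only [Matrix.of_apply]
      rw [dif_pos h]
      have e2 : k + (b : ℕ) - k = (b : ℕ) := by omega
      simp [e2]

lemma finrank_W (n k : ℕ) (hk1 : 1 ≤ k) (hkn : k < n) :
    Module.finrank F (W F n k) = k * (n - k) + 1 := by
  rw [LinearEquiv.finrank_eq (wEquiv F n k hk1 hkn)]
  rw [Module.finrank_prod, Module.finrank_self, Module.finrank_matrix]
  simp [Fintype.card_fin, mul_comm]
  ring

end Stmt7Aux

open Stmt7Aux

/-- For every `n ≥ 2`, there is a tuple of `⌊n/2⌋ + 1` pairwise commuting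
matrices in `M_n(F_q)` whose common centralizer is a commutative subalgebra of
dimension `⌊n²/4⌋ + 1`. -/
theorem stmt7 (n q : ℕ) (hn : 2 ≤ n) (F : Type) [Field F] [Fintype F]
    (hF : Fintype.card F = q) :
    ∃ A : Fin (n / 2 + 1) → Matrix (Fin n) (Fin n) F,
      (∀ i j, Commute (A i) (A j)) ∧
      (∀ x ∈ Subalgebra.centralizer F (Set.range A),
        ∀ y ∈ Subalgebra.centralizer F (Set.range A), x * y = y * x) ∧
      Module.finrank F (Subalgebra.centralizer F (Set.range A) :
        Subalgebra F (Matrix (Fin n) (Fin n) F)) = n ^ 2 / 4 + 1 := by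
  set k := n - n / 2 with hk
  have hk1 : 1 ≤ k := by omega
  have hkn : k < n := by omega
  have h0 : 0 < n := by omega
  set A : Fin (n / 2 + 1) → Matrix (Fin n) (Fin n) F :=
    fun i => if i = 0 then shiftM F n k else eM F n k (k + (i : ℕ) - 1) with hA
  have hsupp : ∀ i, BlockSupp F n k (A i) := by
    intro i
    by_cases hi : i = 0
    · rw [hA]; simp only [hi, if_pos rfl]
      exact blockSupp_shiftM (by omega) (by omega)
    · rw [hA]; simp only [if_neg hi]
      have hiv : (i : ℕ) ≠ 0 := by intro h; apply hi; ext; simp [h]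
      exact blockSupp_eM (by omega) (by omega)
  refine ⟨A, fun i j => (mul_eq_zero_of_blockSupp (hsupp i) (hsupp j)).trans
      (mul_eq_zero_of_blockSupp (hsupp j) (hsupp i)).symm, ?_, ?_⟩
  all_goals {
    have hmem : ∀ x, x ∈ Subalgebra.centralizer F (Set.range A) ↔ P F n k x := by
      intro x
      rw [Subalgebra.mem_centralizer_iff]
      constructor
      · intro h
        apply centralizer_P hkn (by omega) (by omega)
        · have h0' := h (A 0) ⟨0, rfl⟩
          rw [hA] at h0'
          simpa using h0'
        · intro t htk htn
          have hidx : t - k + 1 < n / 2 + 1 := by omega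
          have hgen := h (A ⟨t - k + 1, hidx⟩) ⟨_, rfl⟩
          have hne : (⟨t - k + 1, hidx⟩ : Fin (n / 2 + 1)) ≠ 0 := by
            simp [Fin.ext_iff]
          rw [hA] at hgen
          simp only [if_neg hne] at hgen
          have harg : k + (t - k + 1) - 1 = t := by omega
          rwa [harg] at hgen
      · intro hx g hg
        obtain ⟨i, rfl⟩ := hg
        exact P_commutes_blockSupp h0 hx (hsupp i)
    first
    | exact fun x hx y hy => P_mul_comm h0 ((hmem x).1 hx) ((hmem y).1 hy)
    | { have hWeq : Subalgebra.toSubmodule (Subalgebra.centralizer F (Set.range A))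
            = W F n k := by
          ext x
          exact hmem x
        have hfin : Module.finrank F
              (Subalgebra.centralizer F (Set.range A) :
                Subalgebra F (Matrix (Fin n) (Fin n) F))
            = Module.finrank F (W F n k) :=
          LinearEquiv.finrank_eq (LinearEquiv.ofEq _ _ hWeq)
        rw [hfin, finrank_W n k hk1 hkn]
        have harith : k * (n - k) = n ^ 2 / 4 := by
          rcases Nat.even_or_odd n with ⟨m, rfl⟩ | ⟨m, rfl⟩
          · have h4 : (m + m) ^ 2 = 4 * (m * m) := by ring
            have hm : k = m := by omega
            rw [hm, show m + m - m = m by omega, h4]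
            omega
          · have h4 : (2 * m + 1) ^ 2 = 4 * (m * (m + 1)) + 1 := by ring
            have hm : k = m + 1 := by omega
            rw [hm, show 2 * m + 1 - (m + 1) = m by omega,
              show (m + 1) * m = m * (m + 1) by ring, h4]
            omega
        rw [harith] }
  }
end

section
/- Fix n ≥ 1 and a prime power q, and let m(n) = ⌊n²/4⌋ + 1. Let c(n,k,q) denote the number of orbits of GL_n(F_q) acting by simultaneous conjugation on the set of k-tuples of pairwise commuting matrices in M_n(F_q). Then there exists a constant C₁ > 0 (depending on n and q but not k) such that c(n,k,q) ≥ C₁ · q^{m(n)k} for all sufficiently large k. -/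
open Matrix

section aux
variable {F : Type} [Field F] {r s : ℕ}

/-- The block matrix `[[a•1, B],[0, a•1]]`. -/
def blk (p : F × Matrix (Fin r) (Fin s) F) :
    Matrix (Fin r ⊕ Fin s) (Fin r ⊕ Fin s) F :=
  Matrix.fromBlocks (p.1 • 1) p.2 0 (p.1 • 1)

lemma blk_mul (p p' : F × Matrix (Fin r) (Fin s) F) :
    blk p * blk p' = blk (p.1 * p'.1, p.1 • p'.2 + p'.1 • p.2) := by
  have hc : p.1 * p'.1 = p'.1 * p.1 := mul_comm _ _
  simp [blk, Matrix.fromBlocks_multiply, smul_smul, Matrix.smul_mul, Matrix.mul_smul,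
    add_comm, hc]

lemma blk_comm (p p' : F × Matrix (Fin r) (Fin s) F) :
    blk p * blk p' = blk p' * blk p := by
  rw [blk_mul, blk_mul, mul_comm p.1 p'.1, add_comm (p.1 • p'.2) (p'.1 • p.2)]

lemma blk_injective (hs : 0 < s) :
    Function.Injective (blk (F := F) (r := r) (s := s)) := by
  intro p p' h
  have h22 := congrArg Matrix.toBlocks₂₂ h
  have h12 := congrArg Matrix.toBlocks₁₂ h
  simp only [blk, Matrix.toBlocks_fromBlocks₂₂, Matrix.toBlocks_fromBlocks₁₂] at h22 h12
  have h1 : p.1 = p'.1 := by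
    have := congrFun (congrFun h22 ⟨0, hs⟩) ⟨0, hs⟩
    simpa [Matrix.one_apply] using this
  exact Prod.ext h1 h12

end aux

/-- Lower asymptotic bound: with `m(n) = ⌊n²/4⌋ + 1`, the number `c(n,k,q)` of
simultaneous similarity classes of `k`-tuples of pairwise commuting `n × n`
matrices over `F_q` satisfies `c(n,k,q) ≥ C₁ q^(m(n) k)` for large `k`. -/
theorem stmt15 (n q : ℕ) (hn : 1 ≤ n) (F : Type) [Field F] [Fintype F]
    (hF : Fintype.card F = q) :
    ∃ C₁ : ℝ, 0 < C₁ ∧ ∃ K : ℕ, ∀ k : ℕ, K ≤ k →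
      C₁ * (q : ℝ) ^ ((n ^ 2 / 4 + 1) * k) ≤
      (Nat.card (Quot (fun A B :
          {T : Fin k → Matrix (Fin n) (Fin n) F // ∀ i j, Commute (T i) (T j)} =>
        ∃ g : GL (Fin n) F, ∀ i, B.val i =
          (g : Matrix (Fin n) (Fin n) F) * A.val i *
            ((g⁻¹ : GL (Fin n) F) : Matrix (Fin n) (Fin n) F))) : ℝ) := by
  classical
  have hGpos : 0 < Nat.card (GL (Fin n) F) := Nat.card_pos
  refine ⟨((Nat.card (GL (Fin n) F) : ℝ))⁻¹, by positivity, 0, fun k _ => ?_⟩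
  set r := n / 2 with hr
  set s := n - n / 2 with hs'
  have hs : 0 < s := by omega
  have hrs : r + s = n := by omega
  -- key arithmetic: r * s = n^2/4
  have hm : r * s = n ^ 2 / 4 := by
    rcases Nat.even_or_odd n with ⟨m, hm'⟩ | ⟨m, hm'⟩
    · have h1 : n ^ 2 = m * m * 4 := by rw [hm']; ring
      have h2 : r = m := by omega
      have h3 : s = m := by omega
      rw [h1, h2, h3, Nat.mul_div_cancel _ (by norm_num)]
    · have h1 : n ^ 2 = m * (m + 1) * 4 + 1 := by rw [hm']; ring
      have h2 : r = m := by omega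
      have h3 : s = m + 1 := by omega
      rw [h1, h2, h3]
      omega
  set X := {T : Fin k → Matrix (Fin n) (Fin n) F // ∀ i j, Commute (T i) (T j)} with hX
  set rel : X → X → Prop := fun A B =>
    ∃ g : GL (Fin n) F, ∀ i, B.val i =
      (g : Matrix (Fin n) (Fin n) F) * A.val i *
        ((g⁻¹ : GL (Fin n) F) : Matrix (Fin n) (Fin n) F) with hrel
  have equiv : Equivalence rel := by
    constructor
    · intro A
      exact ⟨1, fun i => by simp⟩
    · rintro A B ⟨g, hg⟩
      refine ⟨g⁻¹, fun i => ?_⟩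
      rw [hg i]
      simp only [inv_inv, mul_assoc, Units.inv_mul, Units.inv_mul_cancel_left, mul_one]
    · rintro A B C ⟨g, hg⟩ ⟨g', hg'⟩
      refine ⟨g' * g, fun i => ?_⟩
      rw [hg' i, hg i]
      simp only [_root_.mul_inv_rev, Units.val_mul, mul_assoc]
  -- the commutative algebra embedding
  let e : Fin r ⊕ Fin s ≃ Fin n := finSumFinEquiv.trans (finCongr hrs)
  let φ := Matrix.reindexAlgEquiv F F e
  let toM : F × Matrix (Fin r) (Fin s) F → Matrix (Fin n) (Fin n) F := fun p => φ (blk p)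
  have toM_inj : Function.Injective toM := fun p p' h =>
    blk_injective hs (φ.injective h)
  have toM_comm : ∀ p p', Commute (toM p) (toM p') := by
    intro p p'
    have := congrArg φ (blk_comm p p')
    exact (show φ (blk p) * φ (blk p') = φ (blk p') * φ (blk p) by
      simpa only [_root_.map_mul] using this)
  let toX : (Fin k → F × Matrix (Fin r) (Fin s) F) → X :=
    fun t => ⟨fun i => toM (t i), fun i j => toM_comm _ _⟩
  have toX_inj : Function.Injective toX := fun t t' h =>
    funext fun i => toM_inj (congrFun (congrArg Subtype.val h) i)
  have key : ∀ t, rel (Quot.mk rel (toX t)).out (toX t) := by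
    intro t
    have h := Quot.out_eq (Quot.mk rel (toX t))
    exact (equiv.eqvGen_iff).mp (Quot.eqvGen_exact h)
  let Φ : (Fin k → F × Matrix (Fin r) (Fin s) F) → Quot rel × GL (Fin n) F :=
    fun t => (Quot.mk rel (toX t), Classical.choose (key t))
  have Φ_inj : Function.Injective Φ := by
    intro t t' h
    have h1 : Quot.mk rel (toX t) = Quot.mk rel (toX t') := congrArg Prod.fst h
    have h2 : Classical.choose (key t) = Classical.choose (key t') := congrArg Prod.snd h
    have s1 := Classical.choose_spec (key t)
    have s2 := Classical.choose_spec (key t')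
    apply toX_inj
    apply Subtype.ext
    funext i
    rw [show (toX t).val i = _ from s1 i, show (toX t').val i = _ from s2 i, h2]
    congr 3
    rw [h1]
  have hcard : Nat.card (Fin k → F × Matrix (Fin r) (Fin s) F) ≤
      Nat.card (Quot rel × GL (Fin n) F) :=
    Nat.card_le_card_of_injective Φ Φ_inj
  have hMat : Fintype.card (Matrix (Fin r) (Fin s) F) = q ^ (r * s) := by
    have h := Fintype.card_congr
      (Matrix.of.symm : Matrix (Fin r) (Fin s) F ≃ (Fin r → Fin s → F))
    rw [h, Fintype.card_fun, Fintype.card_fun, hF, Fintype.card_fin, Fintype.card_fin,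
      ← pow_mul, mul_comm s r]
  have hD : Nat.card (Fin k → F × Matrix (Fin r) (Fin s) F) = q ^ ((n ^ 2 / 4 + 1) * k) := by
    rw [Nat.card_eq_fintype_card, Fintype.card_fun, Fintype.card_prod, hMat,
      hF, Fintype.card_fin, ← pow_succ', ← pow_mul, hm]
  rw [Nat.card_prod, hD] at hcard
  rw [inv_mul_le_iff₀ (by exact_mod_cast hGpos)]
  calc ((q : ℝ)) ^ ((n ^ 2 / 4 + 1) * k)
      = ((q ^ ((n ^ 2 / 4 + 1) * k) : ℕ) : ℝ) := by push_cast; ring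
    _ ≤ ((Nat.card (Quot rel) * Nat.card (GL (Fin n) F) : ℕ) : ℝ) := by exact_mod_cast hcard
    _ = (Nat.card (GL (Fin n) F) : ℝ) * (Nat.card (Quot rel) : ℝ) := by push_cast; ring
end
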